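/- In the initial quotient term algebra over the Simple Crypto Algebra signature, every equivalence class of terms contains exactly one term with no occurrence of the inverse operation (·)⁻¹; that is, every term is equal (modulo the equations) to a unique inverse-free term. -/
import Mathlib


/-- The sorts of the Simple Crypto Algebra signature. -/
inductive RSort : Type
  | top | A | S | D
deriving DecidableEq

/-- Raw terms over the Simple Crypto Algebra signature (the signature has key
constants `a_i`, `b_i` of sort A and `s_i` of sort S, pairing, asymmetric and
symmetric encryption, and key inverse; sort D has no constants or operations,
so it contributes no terms). -/
inductive Raw : Type
  | akey (i : ℕ) (b : Bool)   -- `a_i` when `b = false`, `b_i` when `b = true`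
  | skey (i : ℕ)              -- `s_i`
  | invk (t : Raw)            -- key inverse `(·)⁻¹`
  | pair (t₀ t₁ : Raw)        -- pairing `(·,·) : ⊤ × ⊤ → ⊤`
  | enc (t k : Raw)           -- encryption `{·}_(·) : ⊤ × A → ⊤` and `⊤ × S → ⊤`

/-- The sort of a raw term (`none` when the term is ill-sorted). -/
def Raw.srt : Raw → Option RSort
  | .akey _ _ => some .A
  | .skey _ => some .S
  | .invk t => match t.srt with
      | some .A => some .A
      | some .S => some .S
      | _ => none
  | .pair t₀ t₁ => match t₀.srt, t₁.srt with
      | some _, some _ => some .top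
      | _, _ => none
  | .enc t k => match t.srt, k.srt with
      | some _, some .A => some .top
      | some _, some .S => some .top
      | _, _ => none

def Raw.WellSorted (t : Raw) : Prop := t.srt.isSome = true

/-- Equality of terms modulo the equations of the Simple Crypto Algebra: the
congruence generated by `a_i⁻¹ = b_i`, `b_i⁻¹ = a_i`, `(k⁻¹)⁻¹ = k` for `k`
of sort A, and `k⁻¹ = k` for `k` of sort S. -/
inductive REq : Raw → Raw → Prop
  | refl (t) : REq t t
  | symm {t u} : REq t u → REq u t
  | trans {t u v} : REq t u → REq u v → REq t v
  | invk_congr {t u} : REq t u → REq (.invk t) (.invk u)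
  | pair_congr {t t' u u'} : REq t t' → REq u u' → REq (.pair t u) (.pair t' u')
  | enc_congr {t t' k k'} : REq t t' → REq k k' → REq (.enc t k) (.enc t' k')
  | akey_inv (i : ℕ) (b : Bool) : REq (.invk (.akey i b)) (.akey i (!b))
  | ainv_inv {t} : t.srt = some .A → REq (.invk (.invk t)) t
  | sinv {t} : t.srt = some .S → REq (.invk t) t

/-- A term is inverse-free when it contains no occurrence of `(·)⁻¹`. -/
def Raw.InvFree : Raw → Prop
  | .akey _ _ => True
  | .skey _ => True
  | .invk _ => False
  | .pair t₀ t₁ => t₀.InvFree ∧ t₁.InvFree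
  | .enc t k => t.InvFree ∧ k.InvFree

/-- Normalization: remove all inverses. -/
def Raw.norm : Raw → Raw
  | .akey i b => .akey i b
  | .skey i => .skey i
  | .invk t => match t.norm with
      | .akey i b => .akey i (!b)
      | u => u
  | .pair t₀ t₁ => .pair t₀.norm t₁.norm
  | .enc t k => .enc t.norm k.norm

lemma Raw.norm_of_srtA : ∀ t : Raw, t.srt = some .A → ∃ i b, t.norm = .akey i b := by
  intro t
  induction t with
  | akey i b => exact fun _ => ⟨i, b, rfl⟩
  | skey i => simp [Raw.srt]
  | invk t ih =>
      intro h
      have ht : t.srt = some .A := by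
        simp only [Raw.srt] at h
        rcases hs : t.srt with _ | s
        · rw [hs] at h; simp at h
        · rcases s <;> rw [hs] at h <;> simp_all
      obtain ⟨i, b, hb⟩ := ih ht
      exact ⟨i, !b, by simp [Raw.norm, hb]⟩
  | pair t₀ t₁ ih₀ ih₁ =>
      intro h
      simp only [Raw.srt] at h
      rcases h0 : t₀.srt <;> rcases h1 : t₁.srt <;> rw [h0, h1] at h <;> simp_all
  | enc t k iht ihk =>
      intro h
      simp only [Raw.srt] at h
      rcases h0 : t.srt <;> rcases h1 : k.srt with _ | s <;> rw [h0, h1] at h <;>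
        first | (rcases s <;> simp_all) | simp_all

lemma Raw.norm_of_srtS : ∀ t : Raw, t.srt = some .S → ∃ i, t.norm = .skey i := by
  intro t
  induction t with
  | akey i b => simp [Raw.srt]
  | skey i => exact fun _ => ⟨i, rfl⟩
  | invk t ih =>
      intro h
      have ht : t.srt = some .S := by
        simp only [Raw.srt] at h
        rcases hs : t.srt with _ | s
        · rw [hs] at h; simp at h
        · rcases s <;> rw [hs] at h <;> simp_all
      obtain ⟨i, hb⟩ := ih ht
      exact ⟨i, by simp [Raw.norm, hb]⟩
  | pair t₀ t₁ ih₀ ih₁ =>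
      intro h
      simp only [Raw.srt] at h
      rcases h0 : t₀.srt <;> rcases h1 : t₁.srt <;> rw [h0, h1] at h <;> simp_all
  | enc t k iht ihk =>
      intro h
      simp only [Raw.srt] at h
      rcases h0 : t.srt <;> rcases h1 : k.srt with _ | s <;> rw [h0, h1] at h <;>
        first | (rcases s <;> simp_all) | simp_all

lemma Raw.norm_eq_of_req {t u : Raw} (h : REq t u) : t.norm = u.norm := by
  induction h with
  | refl t => rfl
  | symm _ ih => exact ih.symm
  | trans _ _ ih₁ ih₂ => exact ih₁.trans ih₂
  | invk_congr _ ih => simp [Raw.norm, ih]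
  | pair_congr _ _ ih₁ ih₂ => simp [Raw.norm, ih₁, ih₂]
  | enc_congr _ _ ih₁ ih₂ => simp [Raw.norm, ih₁, ih₂]
  | akey_inv i b => simp [Raw.norm]
  | ainv_inv hA =>
      obtain ⟨i, b, hb⟩ := Raw.norm_of_srtA _ hA
      simp [Raw.norm, hb]
  | sinv hS =>
      obtain ⟨i, hb⟩ := Raw.norm_of_srtS _ hS
      simp [Raw.norm, hb]

lemma Raw.norm_invfree_of_invfree : ∀ t : Raw, t.InvFree → t.norm = t := by
  intro t
  induction t with
  | akey i b => intro _; rfl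
  | skey i => intro _; rfl
  | invk t ih => intro h; exact absurd h (by simp [Raw.InvFree])
  | pair t₀ t₁ ih₀ ih₁ =>
      intro h
      obtain ⟨h₀, h₁⟩ := h
      simp [Raw.norm, ih₀ h₀, ih₁ h₁]
  | enc t k iht ihk =>
      intro h
      obtain ⟨h₀, h₁⟩ := h
      simp [Raw.norm, iht h₀, ihk h₁]

lemma Raw.req_norm : ∀ t : Raw, t.WellSorted → REq t t.norm ∧ t.norm.InvFree := by
  intro t
  induction t with
  | akey i b => intro _; exact ⟨REq.refl _, trivial⟩
  | skey i => intro _; exact ⟨REq.refl _, trivial⟩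
  | invk t ih =>
      intro h
      have hs : t.srt = some .A ∨ t.srt = some .S := by
        unfold Raw.WellSorted at h
        simp only [Raw.srt] at h
        rcases hs : t.srt with _ | s
        · rw [hs] at h; simp at h
        · rcases s <;> rw [hs] at h <;> simp_all
      have hw : t.WellSorted := by
        unfold Raw.WellSorted; rcases hs with hs | hs <;> simp [hs]
      obtain ⟨h₁, h₂⟩ := ih hw
      rcases hs with hs | hs
      · obtain ⟨i, b, hb⟩ := Raw.norm_of_srtA t hs
        refine ⟨?_, ?_⟩
        · have : REq (Raw.invk t) (Raw.invk (Raw.akey i b)) :=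
            REq.invk_congr (hb ▸ h₁)
          have := this.trans (REq.akey_inv i b)
          simpa [Raw.norm, hb] using this
        · simp [Raw.norm, hb]; trivial
      · obtain ⟨i, hb⟩ := Raw.norm_of_srtS t hs
        refine ⟨?_, ?_⟩
        · have h3 : REq (Raw.invk t) (Raw.invk (Raw.skey i)) :=
            REq.invk_congr (hb ▸ h₁)
          have h4 := h3.trans (REq.sinv (t := Raw.skey i) rfl)
          simpa [Raw.norm, hb] using h4
        · simp [Raw.norm, hb]; trivial
  | pair t₀ t₁ ih₀ ih₁ =>
      intro h
      have hw : t₀.WellSorted ∧ t₁.WellSorted := by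
        unfold Raw.WellSorted at *
        simp only [Raw.srt] at h
        rcases h0 : t₀.srt <;> rcases h1 : t₁.srt <;> rw [h0, h1] at h <;> simp_all
      obtain ⟨a₁, a₂⟩ := ih₀ hw.1
      obtain ⟨b₁, b₂⟩ := ih₁ hw.2
      exact ⟨REq.pair_congr a₁ b₁, ⟨a₂, b₂⟩⟩
  | enc t k iht ihk =>
      intro h
      have hw : t.WellSorted ∧ k.WellSorted := by
        unfold Raw.WellSorted at *
        simp only [Raw.srt] at h
        rcases h0 : t.srt <;> rcases h1 : k.srt with _ | s <;> rw [h0, h1] at h <;>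
          first | (rcases s <;> simp_all) | simp_all
      obtain ⟨a₁, a₂⟩ := iht hw.1
      obtain ⟨b₁, b₂⟩ := ihk hw.2
      exact ⟨REq.enc_congr a₁ b₁, ⟨a₂, b₂⟩⟩

/-- In the initial quotient term algebra over the Simple Crypto Algebra
signature, every equivalence class of terms contains exactly one inverse-free
term: every term is equal modulo the equations to a unique inverse-free
term. -/
theorem unique_inverse_free_representative (t : Raw) (h : t.WellSorted) :
    ∃! u : Raw, u.InvFree ∧ REq t u := by
  obtain ⟨h₁, h₂⟩ := Raw.req_norm t h
  refine ⟨t.norm, ⟨h₂, h₁⟩, ?_⟩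
  rintro u ⟨hu, hru⟩
  have := Raw.norm_eq_of_req hru
  rw [Raw.norm_invfree_of_invfree u hu] at this
  exact this.symm
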